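/- Let K be a finite undirected chordal graph and let G_m denote the join of K with a complete graph on m vertices. Then for every m ≥ 0, the number of moral acyclic orientations of G_m is divisible by m!. -/

import Mathlib

/-- A chord of a closed walk: an edge of `G` between two vertices of the walk
that is not an edge of the walk. -/
def SimpleGraph.Walk.HasChord {V : Type*} {G : SimpleGraph V} {v : V}
    (c : G.Walk v v) : Prop :=
  ∃ a b, a ∈ c.support ∧ b ∈ c.support ∧ G.Adj a b ∧ s(a, b) ∉ c.edges

/-- A graph is chordal if every cycle with four or more vertices has a chord. -/
def SimpleGraph.IsChordalGraph {V : Type*} (G : SimpleGraph V) : Prop :=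
  ∀ (v : V) (c : G.Walk v v), c.IsCycle → 4 ≤ c.length → c.HasChord

/-- A vertex is dominating if it is adjacent to every other vertex. -/
def SimpleGraph.IsDominatingVertex {V : Type*} (G : SimpleGraph V) (v : V) : Prop :=
  ∀ w, w ≠ v → G.Adj v w

/-- `D` is an orientation of `G`: each edge gets exactly one direction. -/
def SimpleGraph.IsOrientation {V : Type*} (G : SimpleGraph V) (D : V → V → Prop) : Prop :=
  (∀ a b, G.Adj a b ↔ (D a b ∨ D b a)) ∧ ∀ a b, ¬(D a b ∧ D b a)

/-- An orientation (directed relation) is acyclic if it has no directed cycle. -/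
def IsAcyclicRel {V : Type*} (D : V → V → Prop) : Prop :=
  ∀ a, ¬ Relation.TransGen D a a

/-- An orientation is moral (w.r.t. `G`) if it contains no v-structure. -/
def SimpleGraph.IsMoralOrient {V : Type*} (G : SimpleGraph V) (D : V → V → Prop) : Prop :=
  ∀ a b c, D a c → D b c → a ≠ b → G.Adj a b

/-- The number of moral acyclic orientations of `G`. -/
noncomputable def moralAcyclicCount {V : Type*} (G : SimpleGraph V) : ℕ :=
  Set.ncard {D : V → V → Prop |
    G.IsOrientation D ∧ IsAcyclicRel D ∧ G.IsMoralOrient D}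

/-- Join of two graphs: all edges of each plus all edges across. -/
def joinGraph {V1 V2 : Type*} (G1 : SimpleGraph V1) (G2 : SimpleGraph V2) :
    SimpleGraph (V1 ⊕ V2) where
  Adj x y := match x, y with
    | .inl a, .inl b => G1.Adj a b
    | .inr a, .inr b => G2.Adj a b
    | .inl _, .inr _ => True
    | .inr _, .inl _ => True
  symm := ⟨by rintro (a | a) (b | b) h <;> simp_all [SimpleGraph.adj_comm]⟩
  loopless := ⟨by rintro (a | a) h <;> simp_all⟩

/-- Disjoint union of two graphs. -/
def sumGraph {V1 V2 : Type*} (G1 : SimpleGraph V1) (G2 : SimpleGraph V2) :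
    SimpleGraph (V1 ⊕ V2) where
  Adj x y := match x, y with
    | .inl a, .inl b => G1.Adj a b
    | .inr a, .inr b => G2.Adj a b
    | _, _ => False
  symm := ⟨by rintro (a | a) (b | b) h <;> simp_all [SimpleGraph.adj_comm]⟩
  loopless := ⟨by rintro (a | a) h <;> simp_all⟩

/-! ### Auxiliary material -/

/-- Any strict total order on `Fin m` is induced by a permutation. -/
lemma exists_perm_of_strictOrder {m : ℕ} (r : Fin m → Fin m → Prop)
    (hasym : ∀ i j, r i j → ¬ r j i)
    (htot : ∀ i j, i ≠ j → r i j ∨ r j i)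
    (htrans : ∀ i j k, r i j → r j k → r i k) :
    ∃ σ : Equiv.Perm (Fin m), ∀ i j, r i j ↔ σ.symm i < σ.symm j := by
  classical
  set key : Fin m → ℕ := fun i => (Finset.univ.filter (fun j => r j i)).card with hkey
  have hirr : ∀ i, ¬ r i i := fun i h => hasym _ _ h h
  have hlt : ∀ i, key i < m := by
    intro i
    have hsub : (Finset.univ.filter (fun j => r j i)) ⊆ Finset.univ.erase i := by
      intro j hj
      simp only [Finset.mem_filter] at hj
      refine Finset.mem_erase.mpr ⟨?_, Finset.mem_univ _⟩
      rintro rfl; exact hirr _ hj.2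
    calc key i ≤ (Finset.univ.erase i).card := Finset.card_le_card hsub
      _ < Finset.univ.card := Finset.card_erase_lt_of_mem (Finset.mem_univ i)
      _ = m := by simp
  have hmono : ∀ i j, r i j → key i < key j := by
    intro i j hij
    apply Finset.card_lt_card
    rw [Finset.ssubset_iff_of_subset]
    · exact ⟨i, by simp [hij], by simp [hirr i]⟩
    · intro k hk
      simp only [Finset.mem_filter, Finset.mem_univ, true_and] at hk ⊢
      exact htrans _ _ _ hk hij
  have hiff : ∀ i j, r i j ↔ key i < key j := by
    intro i j
    refine ⟨hmono i j, fun h => ?_⟩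
    rcases eq_or_ne i j with rfl | hne
    · exact absurd h (lt_irrefl _)
    · rcases htot i j hne with h' | h'
      · exact h'
      · exact absurd (hmono _ _ h') (by omega)
  let f : Fin m → Fin m := fun i => ⟨key i, hlt i⟩
  have hinj : Function.Injective f := by
    intro i j hij
    by_contra hne
    have : key i = key j := congrArg Fin.val hij
    rcases htot i j hne with h | h
    · exact absurd (hmono _ _ h) (by omega)
    · exact absurd (hmono _ _ h) (by omega)
  have hbij : Function.Bijective f := Finite.injective_iff_bijective.mp hinj
  refine ⟨(Equiv.ofBijective f hbij).symm, fun i j => ?_⟩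
  show r i j ↔ f i < f j
  rw [Fin.lt_def]
  exact hiff i j

/-- An order-preserving permutation of `Fin m` is the identity. -/
lemma perm_eq_refl_of_orderPreserving {m : ℕ} (f : Equiv.Perm (Fin m))
    (h : ∀ i j : Fin m, i < j ↔ f i < f j) : f = Equiv.refl (Fin m) := by
  have hsm : StrictMono f := fun i j hij => (h i j).mp hij
  have hfe : (f : Fin m → Fin m) = id := by
    have inst : WellFoundedLT (Fin m) := inferInstance
    refine (@StrictMono.range_inj (Fin m) (Fin m) _ _ inst _ _ hsm strictMono_id).1 ?_
    rw [f.surjective.range_eq, Set.range_id]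
  refine Equiv.ext fun x => ?_
  exact congrFun hfe x

/-- The permutation action on relations over `V ⊕ Fin m`. -/
def permAct {V : Type*} {m : ℕ} (σ : Equiv.Perm (Fin m))
    (D : (V ⊕ Fin m) → (V ⊕ Fin m) → Prop) : (V ⊕ Fin m) → (V ⊕ Fin m) → Prop :=
  fun x y => D (Sum.map id σ.symm x) (Sum.map id σ.symm y)

lemma permAct_permAct {V : Type*} {m : ℕ} (σ τ : Equiv.Perm (Fin m))
    (D : (V ⊕ Fin m) → (V ⊕ Fin m) → Prop) :
    permAct σ (permAct τ D) = permAct (τ.trans σ) D := by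
  funext x y
  unfold permAct
  rcases x with a | a <;> rcases y with b | b <;> rfl

lemma permAct_refl {V : Type*} {m : ℕ} (D : (V ⊕ Fin m) → (V ⊕ Fin m) → Prop) :
    permAct (Equiv.refl (Fin m)) D = D := by
  funext x y
  rcases x with a | a <;> rcases y with b | b <;> rfl

lemma sumMap_perm_injective {V : Type*} {m : ℕ} (ρ : Equiv.Perm (Fin m)) :
    Function.Injective (Sum.map (id : V → V) ρ) := by
  rintro (a | a) (b | b) h <;> simp_all

lemma joinGraph_adj_map {V : Type*} {m : ℕ} (K : SimpleGraph V) (ρ : Equiv.Perm (Fin m))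
    (x y : V ⊕ Fin m) :
    (joinGraph K (⊤ : SimpleGraph (Fin m))).Adj (Sum.map id ρ x) (Sum.map id ρ y) ↔
      (joinGraph K (⊤ : SimpleGraph (Fin m))).Adj x y := by
  rcases x with a | a <;> rcases y with b | b <;>
    simp [joinGraph, EmbeddingLike.apply_eq_iff_eq]

lemma permAct_mem {V : Type*} {m : ℕ} (K : SimpleGraph V) (σ : Equiv.Perm (Fin m))
    {D : (V ⊕ Fin m) → (V ⊕ Fin m) → Prop}
    (hD : (joinGraph K (⊤ : SimpleGraph (Fin m))).IsOrientation D ∧ IsAcyclicRel D ∧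
      (joinGraph K (⊤ : SimpleGraph (Fin m))).IsMoralOrient D) :
    (joinGraph K (⊤ : SimpleGraph (Fin m))).IsOrientation (permAct σ D) ∧
      IsAcyclicRel (permAct σ D) ∧
      (joinGraph K (⊤ : SimpleGraph (Fin m))).IsMoralOrient (permAct σ D) := by
  obtain ⟨⟨ho1, ho2⟩, hac, hm⟩ := hD
  refine ⟨⟨?_, fun a b => ho2 _ _⟩, ?_, ?_⟩
  · intro a b
    rw [← joinGraph_adj_map K σ.symm a b]
    exact ho1 _ _
  · intro a h
    exact hac _ (Relation.TransGen.lift (Sum.map id σ.symm) (fun a b hab => hab) _ _ h)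
  · intro a b c h1 h2 hne
    rw [← joinGraph_adj_map K σ.symm a b]
    exact hm _ _ _ h1 h2 (fun he => hne (sumMap_perm_injective σ.symm he))

/-- From a moral acyclic orientation, the restriction to the `Fin m` part
is a strict total order, so it is induced by a permutation. -/
lemma exists_perm_of_mem {V : Type*} {m : ℕ} (K : SimpleGraph V)
    {D : (V ⊕ Fin m) → (V ⊕ Fin m) → Prop}
    (hD : (joinGraph K (⊤ : SimpleGraph (Fin m))).IsOrientation D ∧ IsAcyclicRel D ∧
      (joinGraph K (⊤ : SimpleGraph (Fin m))).IsMoralOrient D) :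
    ∃ σ : Equiv.Perm (Fin m), ∀ i j : Fin m,
      D (Sum.inr i) (Sum.inr j) ↔ σ.symm i < σ.symm j := by
  obtain ⟨⟨ho1, ho2⟩, hac, _⟩ := hD
  refine exists_perm_of_strictOrder (fun i j => D (Sum.inr i) (Sum.inr j))
    (fun i j h h' => ho2 _ _ ⟨h, h'⟩) ?_ ?_
  · intro i j hne
    refine (ho1 (Sum.inr i) (Sum.inr j)).mp ?_
    show (⊤ : SimpleGraph (Fin m)).Adj i j
    simpa using hne
  · intro i j k hij hjk
    rcases eq_or_ne i k with rfl | hne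
    · exact absurd ⟨hij, hjk⟩ (ho2 _ _)
    · have hadj : (joinGraph K (⊤ : SimpleGraph (Fin m))).Adj (Sum.inr i) (Sum.inr k) := by
        show (⊤ : SimpleGraph (Fin m)).Adj i k
        simpa using hne
      rcases (ho1 _ _).mp hadj with h | h
      · exact h
      · exact absurd (Relation.TransGen.head hij (Relation.TransGen.head hjk
          (Relation.TransGen.single h))) (hac (Sum.inr i))

theorem factorial_dvd_count {V : Type*} [Fintype V] (K : SimpleGraph V)
    (hchord : K.IsChordalGraph) :
    ∀ m : ℕ, Nat.factorial m ∣
      moralAcyclicCount (joinGraph K (⊤ : SimpleGraph (Fin m))) := by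
  intro m
  classical
  set G := joinGraph K (⊤ : SimpleGraph (Fin m)) with hGdef
  set S : Set ((V ⊕ Fin m) → (V ⊕ Fin m) → Prop) :=
    {D | G.IsOrientation D ∧ IsAcyclicRel D ∧ G.IsMoralOrient D} with hSdef
  set T : Set ((V ⊕ Fin m) → (V ⊕ Fin m) → Prop) :=
    {D | D ∈ S ∧ ∀ i j : Fin m, D (Sum.inr i) (Sum.inr j) ↔ i < j} with hTdef
  -- the bijection
  have hActMem : ∀ (σ : Equiv.Perm (Fin m)) (D : (V ⊕ Fin m) → (V ⊕ Fin m) → Prop),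
      D ∈ S → permAct σ D ∈ S := fun σ D hD => permAct_mem K σ hD
  let Φ : Equiv.Perm (Fin m) × T → S :=
    fun p => ⟨permAct p.1 p.2.val, hActMem p.1 p.2.val p.2.prop.1⟩
  have hΦbij : Function.Bijective Φ := by
    constructor
    · rintro ⟨σ, ⟨D, hDS, hDord⟩⟩ ⟨τ, ⟨E, hES, hEord⟩⟩ heq
      have heq' : permAct σ D = permAct τ E := congrArg Subtype.val heq
      -- first, σ = τ
      have hlt : ∀ i j : Fin m, σ.symm i < σ.symm j ↔ τ.symm i < τ.symm j := by
        intro i j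
        have h1 : permAct σ D (Sum.inr i) (Sum.inr j) ↔ σ.symm i < σ.symm j :=
          hDord (σ.symm i) (σ.symm j)
        have h2 : permAct τ E (Sum.inr i) (Sum.inr j) ↔ τ.symm i < τ.symm j :=
          hEord (τ.symm i) (τ.symm j)
        rw [← h1, ← h2, heq']
      have hστ : σ = τ := by
        have hf : ∀ a b : Fin m, a < b ↔ (σ.trans τ.symm) a < (σ.trans τ.symm) b := by
          intro a b
          have := hlt (σ a) (σ b)
          simpa using this
        have := perm_eq_refl_of_orderPreserving (σ.trans τ.symm) hf
        have h3 : ∀ a, τ.symm (σ a) = a := fun a => by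
          have := congrArg (fun e => e a) this
          simpa using this
        refine Equiv.ext fun a => ?_
        have := congrArg τ (h3 a)
        simpa using this
      subst hστ
      have hDE : D = E := by
        have := congrArg (permAct σ.symm) heq'
        rwa [permAct_permAct, permAct_permAct, Equiv.self_trans_symm, permAct_refl,
          permAct_refl] at this
      subst hDE
      rfl
    · rintro ⟨E, hES⟩
      obtain ⟨σ, hσ⟩ := exists_perm_of_mem K hES
      have hDS : permAct σ.symm E ∈ S := hActMem σ.symm E hES
      have hDT : permAct σ.symm E ∈ T := by
        refine ⟨hDS, fun i j => ?_⟩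
        show E (Sum.inr (σ i)) (Sum.inr (σ j)) ↔ i < j
        rw [hσ (σ i) (σ j)]
        simp
      refine ⟨⟨σ, ⟨permAct σ.symm E, hDT⟩⟩, ?_⟩
      apply Subtype.ext
      show permAct σ (permAct σ.symm E) = E
      rw [permAct_permAct, Equiv.symm_trans_self, permAct_refl]
  -- counting
  have hcount : moralAcyclicCount G = S.ncard := rfl
  rw [hcount, ← Nat.card_coe_set_eq,
    Nat.card_congr (Equiv.ofBijective Φ hΦbij).symm, Nat.card_prod]
  have : Nat.card (Equiv.Perm (Fin m)) = Nat.factorial m := by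
    rw [Nat.card_eq_fintype_card, Fintype.card_perm, Fintype.card_fin]
  rw [this]
  exact Dvd.intro _ rfl
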